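/- Let φ : ℝ → ℝ be Lipschitz with constant K > 0 and 1-periodic, let α be irrational, and let γ_α(a) denote the unique t with Trans(F_{t,a}) = α. Then γ_α(a) = α − M(φ)·a + o(a) as a → 0, i.e. lim_{a→0} (γ_α(a) − α)/a = −∫₀¹ φ(x) dx. -/

import Mathlib

open Filter Topology Set


lemma aux_bound (φ : ℝ → ℝ) (K : ℝ)
    (hLip : ∀ x y : ℝ, |φ x - φ y| ≤ K * |x - y|)
    (hper : ∀ x : ℝ, φ (x + 1) = φ x) (x : ℝ) : |φ x| ≤ |φ 0| + K := by
  have hp : Function.Periodic φ 1 := hper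
  have h1 : φ x = φ (Int.fract x) := by
    have h := hp.sub_int_mul_eq (x := x) ⌊x⌋
    rw [mul_one] at h
    exact h.symm
  have h2 : |φ (Int.fract x) - φ 0| ≤ K * |Int.fract x - 0| := hLip _ _
  have h3 : |Int.fract x - 0| ≤ 1 := by
    rw [sub_zero, abs_of_nonneg (Int.fract_nonneg x)]
    exact (Int.fract_lt_one x).le
  have hK0 : 0 ≤ K := by
    have := hLip 1 0
    have : (0:ℝ) ≤ K * |(1:ℝ) - 0| := le_trans (abs_nonneg _) this
    simpa using this
  calc |φ x| = |φ (Int.fract x)| := by rw [h1]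
    _ ≤ |φ 0| + |φ (Int.fract x) - φ 0| := by
        have := abs_add_le (φ 0) (φ (Int.fract x) - φ 0); simpa [add_comm] using this
    _ ≤ |φ 0| + K := by nlinarith [h2, h3]

lemma aux_mono (φ : ℝ → ℝ) (K : ℝ) (hK : 0 < K)
    (hLip : ∀ x y : ℝ, |φ x - φ y| ≤ K * |x - y|) {a : ℝ} (ha : |a| ≤ 1 / K) (t : ℝ) :
    Monotone fun x => x + t + a * φ x := by
  intro x y hxy
  have h1 : |a * (φ x - φ y)| ≤ |x - y| := by
    rw [abs_mul]
    calc |a| * |φ x - φ y| ≤ (1/K) * (K * |x - y|) :=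
          mul_le_mul ha (hLip x y) (abs_nonneg _) (by positivity)
      _ = |x - y| := by field_simp
  have h2 : |x - y| = y - x := by rw [abs_sub_comm, abs_of_nonneg (by linarith)]
  have := abs_le.1 h1
  simp only []
  nlinarith [this.1, this.2]


lemma aux_riemann (φ : ℝ → ℝ) (K : ℝ) (hK : 0 < K)
    (hLip : ∀ x y : ℝ, |φ x - φ y| ≤ K * |x - y|)
    (hper : ∀ x : ℝ, φ (x + 1) = φ x) (hcont : Continuous φ)
    (m : ℕ) (hm : 0 < m) (x : ℝ) :
    |(∑ j ∈ Finset.range m, φ (x + j / m)) - m * ∫ t in (0:ℝ)..1, φ t| ≤ K := by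
  have hp : Function.Periodic φ 1 := hper
  have hm' : (0:ℝ) < m := by exact_mod_cast hm
  obtain ⟨a, ha⟩ : ∃ a : ℕ → ℝ, ∀ j : ℕ, a j = x + j / m := ⟨_, fun _ => rfl⟩
  have hint : (∫ t in (0:ℝ)..1, φ t) = ∫ t in x..(x+1), φ t := by
    have := hp.intervalIntegral_add_eq x 0
    simpa using this.symm
  have hadj : (∑ j ∈ Finset.range m, ∫ t in a j..a (j+1), φ t) = ∫ t in x..(x+1), φ t := by
    rw [intervalIntegral.sum_integral_adjacent_intervals
      (fun k _ => (hcont.intervalIntegrable _ _))]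
    have h0 : a 0 = x := by rw [ha]; simp
    have h1 : a m = x + 1 := by
      rw [ha, div_self (ne_of_gt hm')]
    rw [h0, h1]
  have hstep : ∀ j : ℕ, a (j+1) - a j = 1 / m := by
    intro j; rw [ha, ha]; push_cast; ring
  have key : ∀ j ∈ Finset.range m, |(1/(m:ℝ)) * φ (a j) - ∫ t in a j..a (j+1), φ t| ≤ K / m^2 := by
    intro j _
    have hconst : (1/(m:ℝ)) * φ (a j) = ∫ _ in a j..a (j+1), φ (a j) := by
      rw [intervalIntegral.integral_const, hstep j, smul_eq_mul]
    rw [hconst, ← intervalIntegral.integral_sub intervalIntegrable_const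
      (hcont.intervalIntegrable _ _)]
    have hb : ∀ t ∈ Set.uIoc (a j) (a (j+1)), ‖φ (a j) - φ t‖ ≤ K / m := by
      intro t ht
      have hle : a j < a (j+1) := by
        have h := hstep j
        have hpos : (0:ℝ) < 1/m := by positivity
        linarith
      rw [Set.uIoc_of_le hle.le] at ht
      have h1 : |a j - t| ≤ 1 / m := by
        rw [abs_sub_comm, abs_of_nonneg (by linarith [ht.1.le])]
        have h := hstep j; linarith [ht.2]
      calc ‖φ (a j) - φ t‖ ≤ K * |a j - t| := hLip _ _
        _ ≤ K * (1/m) := by nlinarith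
        _ = K / m := by ring
    have := intervalIntegral.norm_integral_le_of_norm_le_const hb
    rw [hstep j] at this
    calc |∫ t in a j..a (j+1), (φ (a j) - φ t)| ≤ K / m * |1/(m:ℝ)| := this
      _ = K / m^2 := by rw [abs_of_pos (by positivity)]; ring
  have e1 : (∑ j ∈ Finset.range m, φ (a j)) - m * ∫ t in (0:ℝ)..1, φ t
      = m * ∑ j ∈ Finset.range m, ((1/(m:ℝ)) * φ (a j) - ∫ t in a j..a (j+1), φ t) := by
    rw [Finset.sum_sub_distrib, hadj, hint, mul_sub, ← Finset.mul_sum, Finset.mul_sum]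
    congr 1
    · rw [← Finset.mul_sum, ← mul_assoc, mul_one_div, div_self (ne_of_gt hm'), one_mul]
  rw [show (∑ j ∈ Finset.range m, φ (x + j / m)) = ∑ j ∈ Finset.range m, φ (a j) from
    Finset.sum_congr rfl (fun j _ => by rw [ha])]
  calc |(∑ j ∈ Finset.range m, φ (a j)) - m * ∫ t in (0:ℝ)..1, φ t|
      = |(m:ℝ)| * |∑ j ∈ Finset.range m, ((1/(m:ℝ)) * φ (a j) - ∫ t in a j..a (j+1), φ t)| := by
        rw [← abs_mul, ← e1]
    _ ≤ (m:ℝ) * (m * (K / m^2)) := by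
        rw [abs_of_pos hm']
        refine mul_le_mul_of_nonneg_left ?_ hm'.le
        calc |∑ j ∈ Finset.range m, ((1/(m:ℝ)) * φ (a j) - ∫ t in a j..a (j+1), φ t)|
            ≤ ∑ j ∈ Finset.range m, |(1/(m:ℝ)) * φ (a j) - ∫ t in a j..a (j+1), φ t| :=
              Finset.abs_sum_le_sum_abs _ _
          _ ≤ ∑ _j ∈ Finset.range m, K / m^2 := Finset.sum_le_sum key
          _ = m * (K / m^2) := by rw [Finset.sum_const, Finset.card_range]; ring
    _ = K := by field_simp

lemma aux_equi (φ : ℝ → ℝ) (K : ℝ) (hK : 0 < K)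
    (hLip : ∀ x y : ℝ, |φ x - φ y| ≤ K * |x - y|)
    (hper : ∀ x : ℝ, φ (x + 1) = φ x) (α : ℝ) (hα : Irrational α)
    {ε : ℝ} (hε : 0 < ε) :
    ∃ m : ℕ, 0 < m ∧ ∀ x : ℝ,
      |(∑ i ∈ Finset.range m, φ (x + i * α)) - m * ∫ t in (0:ℝ)..1, φ t| ≤ m * ε := by
  have hp : Function.Periodic φ 1 := hper
  have hcont : Continuous φ := by
    have h : LipschitzWith (Real.toNNReal K) φ := by
      rw [lipschitzWith_iff_dist_le_mul]
      intro x y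
      rw [Real.dist_eq, Real.dist_eq, Real.coe_toNNReal K hK.le]
      exact hLip x y
    exact h.continuous
  set N : ℕ := max 1 ⌈2*K/ε⌉₊ with hN
  have hN1 : 1 ≤ N := le_max_left _ _
  have hN2 : 2*K/ε ≤ N := le_trans (Nat.le_ceil _) (by exact_mod_cast le_max_right _ _)
  have hne : (Finset.Icc 1 N).Nonempty := ⟨1, by simp [hN1]⟩
  set c : ℝ := (Finset.Icc 1 N).inf' hne (fun k : ℕ => |(k:ℝ)*α - round ((k:ℝ)*α)|) with hc
  have hcpos : 0 < c := by
    rw [hc, Finset.lt_inf'_iff]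
    intro k hk
    have hk1 : 1 ≤ k := (Finset.mem_Icc.1 hk).1
    have hirr : Irrational ((k:ℝ)*α) := hα.natCast_mul (by omega)
    exact abs_pos.2 (sub_ne_zero.2 (hirr.ne_int _))
  set n : ℕ := max N ⌈1/c⌉₊ with hn
  have n_pos : 0 < n := lt_of_lt_of_le hN1 (le_max_left _ _)
  have hsmall : 1/((n:ℝ)+1) < c := by
    rw [div_lt_iff₀ (by positivity)]
    have h1 : 1/c ≤ (⌈1/c⌉₊ : ℝ) := Nat.le_ceil _
    have h2 : ((⌈1/c⌉₊:ℕ):ℝ) ≤ n := by exact_mod_cast le_max_right N _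
    have h3 : 1/c < (n:ℝ)+1 := by linarith
    calc (1:ℝ) = c * (1/c) := by field_simp
      _ < c * ((n:ℝ)+1) := mul_lt_mul_of_pos_left h3 hcpos
  obtain ⟨j, k, hk0, hkn, hjk⟩ := Real.exists_int_int_abs_mul_sub_le α n_pos
  set d : ℕ := Int.gcd j k with hd
  have hd0 : 0 < d := Int.gcd_pos_iff.2 (Or.inr (ne_of_gt hk0))
  set q : ℤ := k / d with hqdef
  set p : ℤ := j / d with hpdef
  have hdq : (d:ℤ) * q = k := Int.mul_ediv_cancel' (Int.gcd_dvd_right j k)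
  have hdp : (d:ℤ) * p = j := Int.mul_ediv_cancel' (Int.gcd_dvd_left j k)
  have hd1 : (1:ℤ) ≤ (d:ℤ) := by exact_mod_cast hd0
  have hq0 : 0 < q := by nlinarith [hdq, hk0]
  have hcop : Int.gcd p q = 1 := Int.gcd_div_gcd_div_gcd (by exact_mod_cast hd0)
  have happrox : |(q:ℝ)*α - p| ≤ 1/((n:ℝ)+1) := by
    have ek : (k:ℝ) = (d:ℝ) * q := by exact_mod_cast hdq.symm
    have ej : (j:ℝ) = (d:ℝ) * p := by exact_mod_cast hdp.symm
    have h1 : |(k:ℝ)*α - j| = (d:ℝ) * |(q:ℝ)*α - p| := by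
      rw [ek, ej, show (d:ℝ)*q*α - (d:ℝ)*p = (d:ℝ)*((q:ℝ)*α - p) by ring, abs_mul,
        abs_of_nonneg (by positivity)]
    have hd1' : (1:ℝ) ≤ (d:ℝ) := by exact_mod_cast hd0
    nlinarith [abs_nonneg ((q:ℝ)*α - p), hjk, h1]
  have hqN : (N:ℤ) < q := by
    by_contra h
    push_neg at h
    have hmem : q.toNat ∈ Finset.Icc 1 N := Finset.mem_Icc.2 ⟨by omega, by omega⟩
    have h1 : c ≤ |((q.toNat:ℕ):ℝ)*α - round (((q.toNat:ℕ):ℝ)*α)| := Finset.inf'_le _ hmem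
    have hcast : ((q.toNat:ℕ):ℝ) = (q:ℝ) := by exact_mod_cast Int.toNat_of_nonneg hq0.le
    rw [hcast] at h1
    have h2 : |(q:ℝ)*α - round ((q:ℝ)*α)| ≤ |(q:ℝ)*α - p| := round_le _ _
    linarith
  set m : ℕ := q.toNat with hmdef
  have hm0 : 0 < m := by omega
  have hmq : ((m:ℕ):ℝ) = (q:ℝ) := by exact_mod_cast Int.toNat_of_nonneg hq0.le
  have hm' : (0:ℝ) < m := by exact_mod_cast hm0
  have hmN : (N:ℝ) < m := by rw [hmq]; exact_mod_cast hqN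
  have hm2K : 2*K < m * ε := by
    have h1 : 2*K/ε < m := lt_of_le_of_lt hN2 hmN
    calc 2*K = (2*K/ε)*ε := by field_simp
      _ < m*ε := mul_lt_mul_of_pos_right h1 hε
  have hmn : (m:ℝ) ≤ (n:ℝ) := by
    have h1 : q ≤ k := by nlinarith [hdq]
    rw [hmq]
    exact_mod_cast le_trans h1 hkn
  have halpha : |α - (p:ℝ)/m| ≤ 1/(m:ℝ)^2 := by
    have h1 : (α - (p:ℝ)/m) * m = (q:ℝ)*α - p := by
      field_simp
      rw [hmq]
    have h2 : |α - (p:ℝ)/m| * m = |(q:ℝ)*α - p| := by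
      rw [← h1, abs_mul, abs_of_pos hm']
    have h3 : 1/((n:ℝ)+1) ≤ 1/(m:ℝ) := by
      apply one_div_le_one_div_of_le hm'
      linarith
    have h4 : |α - (p:ℝ)/m| * m ≤ 1/(m:ℝ) := by rw [h2]; linarith
    rw [show (1:ℝ)/(m:ℝ)^2 = (1/m)/m by ring]
    exact (le_div_iff₀ hm').2 h4
  set P : ℕ := (p % ((m:ℕ):ℤ)).toNat with hPdef
  have hmzne : ((m:ℕ):ℤ) ≠ 0 := by exact_mod_cast hm0.ne'
  have hPz : ((P:ℕ):ℤ) = p % ((m:ℕ):ℤ) := Int.toNat_of_nonneg (Int.emod_nonneg p hmzne)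
  have hdvdPp : ((m:ℕ):ℤ) ∣ p - ((P:ℕ):ℤ) := by
    rw [hPz]
    exact Int.dvd_self_sub_of_emod_eq rfl
  have hcopPm : Nat.Coprime P m := by
    have hmz : ((m:ℕ):ℤ) = q := Int.toNat_of_nonneg hq0.le
    have h1 : IsCoprime (p:ℤ) ((m:ℕ):ℤ) := by
      rw [Int.isCoprime_iff_gcd_eq_one, hmz]
      exact hcop
    have h2 : IsCoprime ((P:ℕ):ℤ) ((m:ℕ):ℤ) := by
      obtain ⟨w, hw⟩ := hdvdPp
      have he : ((P:ℕ):ℤ) = p + ((m:ℕ):ℤ) * (-w) := by linarith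
      rw [he]
      exact h1.add_mul_left_left (-w)
    rw [Int.isCoprime_iff_gcd_eq_one] at h2
    exact_mod_cast h2
  refine ⟨m, hm0, fun x => ?_⟩
  have hT2 : ∀ i : ℕ, φ (x + i * ((p:ℝ)/m)) = φ (x + ((i*P) % m : ℕ)/m) := by
    intro i
    obtain ⟨w, hw⟩ : ((m:ℕ):ℤ) ∣ ((i:ℤ)*p - (((i*P) % m : ℕ):ℤ)) := by
      have h1 : ((m:ℕ):ℤ) ∣ (i:ℤ)*(p - P) := Dvd.dvd.mul_left hdvdPp i
      have h2' : m ∣ (i*P - (i*P) % m) := Nat.dvd_sub_mod _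
      have h2 : ((m:ℕ):ℤ) ∣ ((i*P : ℕ):ℤ) - (((i*P) % m : ℕ):ℤ) := by
        have h3 := Int.natCast_dvd_natCast.2 h2'
        rwa [Nat.cast_sub (Nat.mod_le _ _)] at h3
      have h4 : (i:ℤ)*p - (((i*P) % m : ℕ):ℤ)
          = (i:ℤ)*(p - P) + (((i*P : ℕ):ℤ) - (((i*P) % m : ℕ):ℤ)) := by push_cast; ring
      rw [h4]
      exact dvd_add h1 h2
    have hwR : (i:ℝ)*p - (((i*P) % m : ℕ):ℝ) = (m:ℝ) * w := by
      have h := congrArg (fun z : ℤ => (z:ℝ)) hw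
      push_cast at h
      exact h
    have hxw : x + i*((p:ℝ)/m) = (x + (((i*P) % m : ℕ):ℝ)/m) + (w:ℝ) * 1 := by
      rw [mul_one]
      field_simp
      linarith [hwR]
    rw [hxw]
    exact (hp.int_mul w) _
  have hT3 : (∑ i ∈ Finset.range m, φ (x + (((i*P) % m : ℕ):ℝ)/m))
      = ∑ jj ∈ Finset.range m, φ (x + jj/m) := by
    have hinj : ∀ i1 ∈ Finset.range m, ∀ i2 ∈ Finset.range m,
        (i1*P) % m = (i2*P) % m → i1 = i2 := by
      intro i1 h1 i2 h2 he
      have hmod : i1 % m = i2 % m :=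
        Nat.ModEq.cancel_right_of_coprime (by rwa [Nat.coprime_comm] at hcopPm) he
      rwa [Nat.mod_eq_of_lt (Finset.mem_range.1 h1), Nat.mod_eq_of_lt (Finset.mem_range.1 h2)]
        at hmod
    have himg : (Finset.range m).image (fun i => (i*P) % m) = Finset.range m := by
      apply Finset.eq_of_subset_of_card_le
      · intro y hy
        obtain ⟨i, hi, rfl⟩ := Finset.mem_image.1 hy
        exact Finset.mem_range.2 (Nat.mod_lt _ hm0)
      · rw [Finset.card_image_of_injOn
          (fun a ha b hb hab => hinj a (Finset.mem_coe.1 ha) b (Finset.mem_coe.1 hb) hab)]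
    calc ∑ i ∈ Finset.range m, φ (x + (((i*P) % m : ℕ):ℝ)/m)
        = ∑ jj ∈ (Finset.range m).image (fun i => (i*P) % m), φ (x + (jj:ℝ)/m) :=
          (Finset.sum_image (f := fun jj : ℕ => φ (x + (jj:ℝ)/m)) hinj).symm
      _ = ∑ jj ∈ Finset.range m, φ (x + (jj:ℝ)/m) := by rw [himg]
  have hT1 : |(∑ i ∈ Finset.range m, φ (x + i * α))
      - ∑ i ∈ Finset.range m, φ (x + i * ((p:ℝ)/m))| ≤ K := by
    rw [← Finset.sum_sub_distrib]
    calc |∑ i ∈ Finset.range m, (φ (x + i*α) - φ (x + i*((p:ℝ)/m)))|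
        ≤ ∑ i ∈ Finset.range m, |φ (x + i*α) - φ (x + i*((p:ℝ)/m))| :=
          Finset.abs_sum_le_sum_abs _ _
      _ ≤ ∑ _i ∈ Finset.range m, K/m := by
          apply Finset.sum_le_sum
          intro i hi
          have hi' : (i:ℝ) ≤ m := by exact_mod_cast (Finset.mem_range.1 hi).le
          have hi0 : (0:ℝ) ≤ (i:ℝ) := Nat.cast_nonneg i
          calc |φ (x + i*α) - φ (x + i*((p:ℝ)/m))| ≤ K * |x + i*α - (x + i*((p:ℝ)/m))| :=
                hLip _ _
            _ = K * ((i:ℝ) * |α - (p:ℝ)/m|) := by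
                rw [show x + i*α - (x + i*((p:ℝ)/m)) = (i:ℝ)*(α - (p:ℝ)/m) by ring, abs_mul,
                  abs_of_nonneg hi0]
            _ ≤ K * ((m:ℝ) * (1/(m:ℝ)^2)) := by
                apply mul_le_mul_of_nonneg_left _ hK.le
                apply mul_le_mul hi' halpha (abs_nonneg _) hm'.le
            _ = K/m := by field_simp
      _ = K := by
          rw [Finset.sum_const, Finset.card_range, nsmul_eq_mul]
          field_simp
  have hT4 := aux_riemann φ K hK hLip hper hcont m hm0 x
  have he : (∑ i ∈ Finset.range m, φ (x + i*((p:ℝ)/m))) = ∑ jj ∈ Finset.range m, φ (x + (jj:ℝ)/m) := by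
    rw [Finset.sum_congr rfl (fun i _ => hT2 i), hT3]
  calc |(∑ i ∈ Finset.range m, φ (x + i * α)) - m * ∫ t in (0:ℝ)..1, φ t|
      ≤ |(∑ i ∈ Finset.range m, φ (x + i * α)) - ∑ i ∈ Finset.range m, φ (x + i*((p:ℝ)/m))|
        + |(∑ i ∈ Finset.range m, φ (x + i*((p:ℝ)/m))) - m * ∫ t in (0:ℝ)..1, φ t| :=
        abs_sub_le _ _ _
    _ ≤ K + K := by
        refine add_le_add hT1 ?_
        rw [he]
        exact hT4
    _ ≤ m * ε := by linarith


noncomputable def mkLift (φ : ℝ → ℝ) (t a : ℝ) (hm : Monotone fun x => x + t + a * φ x)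
    (hone : ∀ x : ℝ, φ (x + 1) = φ x) : CircleDeg1Lift :=
  ⟨⟨fun x => x + t + a * φ x, hm⟩, fun x => by dsimp; rw [hone]; ring⟩

lemma aux_denjoy (f : CircleDeg1Lift) (x : ℝ) : |f x - x - f.translationNumber| ≤ 1 := by
  have h1 : f x < x + f.translationNumber + 1 := f.map_lt_add_translationNumber_add_one x
  have h2 : x + ((⌈f.translationNumber⌉ - 1 : ℤ) : ℝ) < f x := by
    apply f.lt_map_of_int_lt_translationNumber
    push_cast
    linarith [Int.ceil_lt_add_one f.translationNumber]
  have h3 : f.translationNumber ≤ (⌈f.translationNumber⌉ : ℝ) := Int.le_ceil _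
  push_cast at h2
  rw [abs_le]
  constructor <;> linarith

lemma aux_iter (φ : ℝ → ℝ) (t a : ℝ) (F : ℝ → ℝ) (hF : ∀ x, F x = x + t + a * φ x) (y : ℝ) :
    ∀ n : ℕ, F^[n] y = y + n * t + a * ∑ k ∈ Finset.range n, φ (F^[k] y) := by
  intro n
  induction n with
  | zero => simp
  | succ n ih =>
    rw [Function.iterate_succ_apply', hF, Finset.sum_range_succ, ih]
    push_cast
    ring

/-- `τ` is the translation number of `F`: for every `x`, `(F^[n] x - x)/n → τ`. -/
def IsTransNum (F : ℝ → ℝ) (τ : ℝ) : Prop :=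
  ∀ x : ℝ, Filter.Tendsto (fun n : ℕ => (F^[n] x - x) / n) Filter.atTop (nhds τ)

theorem stmt_11 (φ : ℝ → ℝ) (K : ℝ) (hK : 0 < K)
    (hLip : ∀ x y : ℝ, |φ x - φ y| ≤ K * |x - y|)
    (hper : ∀ x : ℝ, φ (x + 1) = φ x)
    (τ : ℝ → ℝ → ℝ)
    (hτ : ∀ t : ℝ, ∀ a ∈ Set.Ioo (-(1 / K)) (1 / K),
      IsTransNum (fun x => x + t + a * φ x) (τ t a))
    (α : ℝ) (hα : Irrational α)
    (γ : ℝ → ℝ) (hγ : ∀ a ∈ Set.Ioo (-(1 / K)) (1 / K), τ (γ a) a = α) :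
    Filter.Tendsto (fun a : ℝ => (γ a - α) / a) (nhdsWithin 0 {0}ᶜ)
      (nhds (-∫ x in (0 : ℝ)..1, φ x)) := by
  set C : ℝ := |φ 0| + K with hC
  have hC0 : 0 < C := by have := abs_nonneg (φ 0); rw [hC]; linarith
  have hbd : ∀ x, |φ x| ≤ C := aux_bound φ K hLip hper
  set M : ℝ := ∫ x in (0:ℝ)..1, φ x with hM
  rw [Metric.tendsto_nhdsWithin_nhds]
  intro ε hε
  obtain ⟨m, hm0, hequi⟩ := aux_equi φ K hK hLip hper α hα (show 0 < ε/3 by linarith)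
  have hm' : (0:ℝ) < m := by exact_mod_cast hm0
  have hden1 : (0:ℝ) < 2*K*C*m+1 := by
    have h0 : (0:ℝ) ≤ 2*K*C*m :=
      mul_nonneg (mul_nonneg (mul_nonneg (by norm_num) hK.le) hC0.le) hm'.le
    linarith
  refine ⟨min (1/K) (ε/(3*(2*K*C*m+1))), lt_min (by positivity) (by positivity), ?_⟩
  intro a ha hdist
  have ha0 : a ≠ 0 := ha
  have ha0' : (0:ℝ) < |a| := abs_pos.2 ha0
  rw [Real.dist_eq, sub_zero] at hdist
  have haK : |a| < 1/K := lt_of_lt_of_le hdist (min_le_left _ _)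
  have haε : |a| < ε/(3*(2*K*C*m+1)) := lt_of_lt_of_le hdist (min_le_right _ _)
  have haJ : a ∈ Set.Ioo (-(1/K)) (1/K) := abs_lt.1 haK
  have hamono : Monotone fun x => x + γ a + a * φ x := aux_mono φ K hK hLip haK.le _
  set f : CircleDeg1Lift := mkLift φ (γ a) a hamono hper with hfdef
  have hfx : ∀ x, f x = x + γ a + a * φ x := fun x => rfl
  have hτα : f.translationNumber = α := by
    have h1 := (hτ (γ a) a haJ) 0
    rw [hγ a haJ] at h1
    have h2 := f.tendsto_translationNumber 0
    have h3 : (fun n : ℕ => ((f^n) 0 - 0)/(n:ℝ))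
        = fun n : ℕ => ((fun x => x + γ a + a * φ x)^[n] 0 - 0)/(n:ℝ) := by
      funext nn
      rw [CircleDeg1Lift.coe_pow]
      rfl
    rw [h3] at h2
    exact tendsto_nhds_unique h2 h1
  have hγbd : |γ a - α| ≤ |a| * C := by
    have hub : f.translationNumber ≤ γ a + |a| *C := by
      apply CircleDeg1Lift.translationNumber_le_of_le_add
      intro x
      rw [hfx x]
      have h1 : a * φ x ≤ |a| * C := by
        calc a * φ x ≤ |a * φ x| := le_abs_self _
          _ = |a| * |φ x| := abs_mul _ _
          _ ≤ |a| * C := mul_le_mul_of_nonneg_left (hbd x) (abs_nonneg a)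
      linarith
    have hlb : γ a - |a| *C ≤ f.translationNumber := by
      apply CircleDeg1Lift.le_translationNumber_of_add_le
      intro x
      rw [hfx x]
      have h1 : -(|a| * C) ≤ a * φ x := by
        have : |a * φ x| ≤ |a| * C := by
          rw [abs_mul]; exact mul_le_mul_of_nonneg_left (hbd x) (abs_nonneg a)
        linarith [neg_abs_le (a * φ x)]
      linarith
    rw [hτα] at hub hlb
    rw [abs_le]
    constructor <;> linarith
  have hiter : ∀ y : ℝ, ∀ nn : ℕ,
      f^[nn] y = y + nn * γ a + a * ∑ k ∈ Finset.range nn, φ (f^[k] y) :=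
    fun y => aux_iter φ (γ a) a f hfx y
  have hsum_bd : ∀ (y : ℝ) (nn : ℕ), |∑ k ∈ Finset.range nn, φ (f^[k] y)| ≤ nn * C := by
    intro y nn
    calc |∑ k ∈ Finset.range nn, φ (f^[k] y)| ≤ ∑ k ∈ Finset.range nn, |φ (f^[k] y)| :=
          Finset.abs_sum_le_sum_abs _ _
      _ ≤ ∑ _k ∈ Finset.range nn, C := Finset.sum_le_sum (fun k _ => hbd _)
      _ = nn * C := by rw [Finset.sum_const, Finset.card_range, nsmul_eq_mul]
  have hdrift : ∀ (y : ℝ) (i : ℕ), i ≤ m → |f^[i] y - (y + i * α)| ≤ 2 * m * |a| * C := by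
    intro y i him
    have h1 := hiter y i
    have h2 := hsum_bd y i
    have him' : (i:ℝ) ≤ m := by exact_mod_cast him
    have e : f^[i] y - (y + i*α) = i*(γ a - α) + a * (∑ k ∈ Finset.range i, φ (f^[k] y)) := by
      rw [h1]; ring
    rw [e]
    have hi0 : (0:ℝ) ≤ (i:ℝ) := Nat.cast_nonneg i
    calc |(i:ℝ)*(γ a - α) + a * (∑ k ∈ Finset.range i, φ (f^[k] y))|
        ≤ |(i:ℝ)*(γ a - α)| + |a * (∑ k ∈ Finset.range i, φ (f^[k] y))| := abs_add_le _ _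
      _ = (i:ℝ)*|γ a - α| + |a| * |∑ k ∈ Finset.range i, φ (f^[k] y)| := by
          rw [abs_mul, abs_mul, abs_of_nonneg hi0]
      _ ≤ (i:ℝ)*(|a| *C) + |a| * ((i:ℝ)*C) := by
          refine add_le_add ?_ ?_
          · exact mul_le_mul_of_nonneg_left hγbd hi0
          · exact mul_le_mul_of_nonneg_left h2 (abs_nonneg a)
      _ ≤ (m:ℝ)*(|a| * C) + |a| * ((m:ℝ)*C) := by gcongr
      _ = 2 * m * |a| * C := by ring
  have hblock : ∀ y : ℝ, |(∑ i ∈ Finset.range m, φ (f^[i] y)) - m * M|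
      ≤ m*(ε/3) + m*(K*(2*m*|a| *C)) := by
    intro y
    have h1 := hequi y
    have h2 : |∑ i ∈ Finset.range m, (φ (f^[i] y) - φ (y + i*α))| ≤ m * (K*(2*m*|a| *C)) := by
      calc |∑ i ∈ Finset.range m, (φ (f^[i] y) - φ (y + i*α))|
          ≤ ∑ i ∈ Finset.range m, |φ (f^[i] y) - φ (y + i*α)| := Finset.abs_sum_le_sum_abs _ _
        _ ≤ ∑ _i ∈ Finset.range m, K*(2*m*|a| *C) := by
            apply Finset.sum_le_sum
            intro i hi
            calc |φ (f^[i] y) - φ (y + i*α)| ≤ K * |f^[i] y - (y + i*α)| := hLip _ _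
              _ ≤ K * (2*m*|a| *C) :=
                  mul_le_mul_of_nonneg_left (hdrift y i (Finset.mem_range.1 hi).le) hK.le
        _ = m * (K*(2*m*|a| *C)) := by rw [Finset.sum_const, Finset.card_range, nsmul_eq_mul]
    have e : (∑ i ∈ Finset.range m, φ (f^[i] y)) - m * M
        = (∑ i ∈ Finset.range m, (φ (f^[i] y) - φ (y + i*α)))
          + ((∑ i ∈ Finset.range m, φ (y + i*α)) - m * M) := by
      rw [Finset.sum_sub_distrib]; ring
    rw [e]
    calc _ ≤ |∑ i ∈ Finset.range m, (φ (f^[i] y) - φ (y + i*α))|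
          + |(∑ i ∈ Finset.range m, φ (y + i*α)) - m * M| := abs_add_le _ _
      _ ≤ m * (K*(2*m*|a| *C)) + m*(ε/3) := add_le_add h2 h1
      _ = m*(ε/3) + m*(K*(2*m*|a| *C)) := by ring
  have htot : ∀ J : ℕ, |(∑ k ∈ Finset.range (J*m), φ (f^[k] 0)) - (J:ℝ)*m * M|
      ≤ (J:ℝ)*m*(ε/3 + K*(2*m*|a| *C)) := by
    intro J
    induction J with
    | zero => simp
    | succ J ih =>
      have e : (J+1)*m = J*m + m := by ring
      rw [e, Finset.sum_range_add]
      have e2 : ∀ i ∈ Finset.range m, φ (f^[J*m + i] 0) = φ (f^[i] (f^[J*m] 0)) := by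
        intro i _
        rw [add_comm, Function.iterate_add_apply]
      rw [Finset.sum_congr rfl e2]
      have hb := hblock (f^[J*m] 0)
      have hi1 := abs_le.1 ih
      have hb1 := abs_le.1 hb
      rw [abs_le]
      push_cast
      constructor <;> linarith [hi1.1, hi1.2, hb1.1, hb1.2]
  have hden : ∀ nn : ℕ, |f^[nn] 0 - 0 - nn * α| ≤ 1 := by
    intro nn
    have h := aux_denjoy (f^nn) 0
    rw [CircleDeg1Lift.coe_pow, CircleDeg1Lift.translationNumber_pow, hτα] at h
    exact h
  set J : ℕ := ⌈3/(ε * m * |a|)⌉₊ + 1 with hJdef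
  have hJ0 : (0:ℝ) < J := by positivity
  have hJbig : 3/ε < (J:ℝ)*m*|a| := by
    have h1 : 3/(ε * m * |a|) < J := by
      calc 3/(ε * m * |a|) ≤ (⌈3/(ε * m * |a|)⌉₊:ℝ) := Nat.le_ceil _
        _ < J := by rw [hJdef]; push_cast; linarith
    calc 3/ε = (3/(ε * m * |a|)) * (m * |a|) := by field_simp
      _ < (J:ℝ) * (m * |a|) := mul_lt_mul_of_pos_right h1 (by positivity)
      _ = (J:ℝ)*m*|a| := by ring
  have hSM := htot J
  have hX : |(J:ℝ)*m*(γ a) + a*(∑ k ∈ Finset.range (J*m), φ (f^[k] 0)) - (J:ℝ)*m*α| ≤ 1 := by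
    have h := hden (J*m)
    rw [hiter 0 (J*m)] at h
    have e : (0:ℝ) + (↑(J*m):ℝ) * γ a + a * (∑ k ∈ Finset.range (J*m), φ (f^[k] 0))
        - 0 - (↑(J*m):ℝ)*α
        = (J:ℝ)*m*(γ a) + a*(∑ k ∈ Finset.range (J*m), φ (f^[k] 0)) - (J:ℝ)*m*α := by
      push_cast; ring
    rwa [e] at h
  set S : ℝ := ∑ k ∈ Finset.range (J*m), φ (f^[k] 0) with hSdef
  have hnm : (0:ℝ) < (J:ℝ)*m := by positivity
  have hnmne : (J:ℝ)*m ≠ 0 := ne_of_gt hnm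
  rw [Real.dist_eq]
  have e : (γ a - α)/a - (-M)
      = ((J:ℝ)*m*(γ a) + a*S - (J:ℝ)*m*α)/(((J:ℝ)*m)*a) - (S - (J:ℝ)*m*M)/((J:ℝ)*m) := by
    field_simp
    ring
  rw [e]
  have habs : ∀ u v : ℝ, |u - v| ≤ |u| + |v| := fun u v => by
    rw [sub_eq_add_neg]
    exact (abs_add_le u (-v)).trans_eq (by rw [abs_neg])
  have h1 : |((J:ℝ)*m*(γ a) + a*S - (J:ℝ)*m*α)/(((J:ℝ)*m)*a)| ≤ 1/(((J:ℝ)*m)*|a|) := by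
    rw [abs_div, abs_mul, abs_of_pos hnm]
    gcongr
  have h2 : |(S - (J:ℝ)*m*M)/((J:ℝ)*m)| ≤ ε/3 + K*(2*m*|a| * C) := by
    rw [abs_div, abs_of_pos hnm, div_le_iff₀ hnm]
    calc |S - (J:ℝ)*m*M| ≤ (J:ℝ)*m*(ε/3 + K*(2*m*|a| * C)) := hSM
      _ = (ε/3 + K*(2*m*|a| * C)) * ((J:ℝ)*m) := by ring
  have h3 : 1/(((J:ℝ)*m)*|a|) < ε/3 := by
    have hp : (0:ℝ) < 3/ε := by positivity
    calc 1/(((J:ℝ)*m)*|a|) = 1/((J:ℝ)*m*|a|) := by ring_nf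
      _ < 1/(3/ε) := by
          apply one_div_lt_one_div_of_lt hp hJbig
      _ = ε/3 := by rw [one_div_div]
  have h4 : K*(2*m*|a| * C) < ε/3 := by
    have haD : |a| * (3*(2*K*C*m+1)) < ε := by
      rw [lt_div_iff₀ (by positivity)] at haε
      exact haε
    nlinarith [ha0']
  calc |((J:ℝ)*m*(γ a) + a*S - (J:ℝ)*m*α)/(((J:ℝ)*m)*a) - (S - (J:ℝ)*m*M)/((J:ℝ)*m)|
      ≤ |((J:ℝ)*m*(γ a) + a*S - (J:ℝ)*m*α)/(((J:ℝ)*m)*a)| + |(S - (J:ℝ)*m*M)/((J:ℝ)*m)| :=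
        habs _ _
    _ ≤ 1/(((J:ℝ)*m)*|a|) + (ε/3 + K*(2*m*|a| * C)) := add_le_add h1 h2
    _ < ε := by linarith
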